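/- arXiv:1308.0840 — 3 statements merged into one kernel-verified Lean document; each statement's English description precedes it below -/
import Mathlib

section
/- Let π be any permutation of bitvectors of length n. Then there exists a permutation σ of bitvectors of length n+1 such that σ is parity-preserving and for every bitvector x of length n, σ applied to the extension of x by the bit 0 agrees with π(x) on the first n coordinates. That is, any n-variable reversible Boolean specification can be converted to a parity-preserving reversible specification using at most one extra variable set to constant 0 on the input side. -/
/-- Parity of a bitvector: XOR of its bits (true iff an odd number of ones). -/
def parity {n : ℕ} (x : Fin n → Bool) : Bool :=
  (Finset.univ.filter fun i => x i = true).card % 2 == 1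

lemma parity_snoc {n : ℕ} (x : Fin n → Bool) (b : Bool) :
    parity (Fin.snoc x b) = xor (parity x) b := by
  unfold parity
  have h : (Finset.univ.filter fun i => (Fin.snoc x b : Fin (n+1) → Bool) i = true).card
      = (Finset.univ.filter fun i => x i = true).card + (if b then 1 else 0) := by
    rw [Finset.card_filter, Finset.card_filter, Fin.sum_univ_castSucc]
    simp [Fin.snoc_castSucc]
  rw [h]
  rcases Nat.mod_two_eq_zero_or_one (Finset.univ.filter fun i => x i = true).card with h2 | h2 <;>
    cases b <;> simp [Nat.add_mod, h2]

/-- Any permutation of length-n bitvectors extends, with one extra variable set to 0, to a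
parity-preserving permutation of length-(n+1) bitvectors agreeing on the first n coordinates. -/
theorem exists_parity_preserving_extension (n : ℕ) (π : Equiv.Perm (Fin n → Bool)) :
    ∃ σ : Equiv.Perm (Fin (n + 1) → Bool),
      (∀ y, parity (σ y) = parity y) ∧
      ∀ x : Fin n → Bool, ∀ i : Fin n, σ (Fin.snoc x false) i.castSucc = π x i := by
  set f : (Fin (n+1) → Bool) → (Fin (n+1) → Bool) := fun y =>
    Fin.snoc (π (y ∘ Fin.castSucc)) (xor (parity (π (y ∘ Fin.castSucc))) (parity y)) with hf
  set g : (Fin (n+1) → Bool) → (Fin (n+1) → Bool) := fun y =>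
    Fin.snoc (π.symm (y ∘ Fin.castSucc)) (xor (parity (π.symm (y ∘ Fin.castSucc))) (parity y))
    with hg
  have hsnoc_comp : ∀ (z : Fin n → Bool) (b : Bool),
      (Fin.snoc z b : Fin (n+1) → Bool) ∘ Fin.castSucc = z := by
    intro z b; funext i; simp [Fin.snoc_castSucc]
  have hpar_f : ∀ y, parity (f y) = parity y := by
    intro y
    rw [hf]
    simp only
    rw [parity_snoc]
    cases parity (π (y ∘ Fin.castSucc)) <;> cases parity y <;> rfl
  have hpar_g : ∀ y, parity (g y) = parity y := by
    intro y
    rw [hg]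
    simp only
    rw [parity_snoc]
    cases parity (π.symm (y ∘ Fin.castSucc)) <;> cases parity y <;> rfl
  have hself : ∀ y : Fin (n+1) → Bool,
      Fin.snoc (y ∘ Fin.castSucc) (y (Fin.last n)) = y := by
    intro y; funext i
    refine Fin.lastCases ?_ ?_ i
    · simp
    · intro j; simp [Fin.snoc_castSucc]
  have hlast : ∀ y : Fin (n+1) → Bool,
      y (Fin.last n) = xor (parity (y ∘ Fin.castSucc)) (parity y) := by
    intro y
    have h2 := parity_snoc (y ∘ Fin.castSucc) (y (Fin.last n))
    rw [hself y] at h2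
    rw [h2]
    cases parity (y ∘ Fin.castSucc) <;> cases y (Fin.last n) <;> rfl
  refine ⟨⟨f, g, ?_, ?_⟩, ?_, ?_⟩
  · intro y
    show g (f y) = y
    have h1 : f y ∘ Fin.castSucc = π (y ∘ Fin.castSucc) := hsnoc_comp _ _
    rw [hg]
    simp only
    rw [h1, Equiv.symm_apply_apply, hpar_f, ← hlast y, hself]
  · intro y
    show f (g y) = y
    have h1 : g y ∘ Fin.castSucc = π.symm (y ∘ Fin.castSucc) := hsnoc_comp _ _
    rw [hf]
    simp only
    rw [h1, Equiv.apply_symm_apply, hpar_g, ← hlast y, hself]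
  · exact hpar_f
  · intro x i
    show f (Fin.snoc x false) i.castSucc = π x i
    rw [hf]
    simp only
    rw [hsnoc_comp, Fin.snoc_castSucc]
end

section
/- Let f : (Fin n → Bool) → (Fin m → Bool). For y in the range of f, let n_y = |f⁻¹(y)| and n_{y,p} = |{x : f(x) = y and parity(x) = parity(y)}|. If g extra output bits suffice to extend f to an injective parity-preserving function F : (Fin n → Bool) → (Fin (m+g) → Bool) (first m coordinates of F agreeing with f, parity(F(x)) = parity(x) for all x), then for every y in the range, 2^(g-1) ≥ n_{y,p} and 2^(g-1) ≥ n_y − n_{y,p}. In particular g ≥ max over y of max(⌈log₂ n_{y,p}⌉ + 1, ⌈log₂ (n_y − n_{y,p})⌉ + 1) whenever the respective counts are positive. -/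
lemma parity_append {m g : ℕ} (x : Fin (m + g) → Bool) :
    parity x = xor (parity (fun i : Fin m => x (Fin.castAdd g i)))
                   (parity (fun j : Fin g => x (Fin.natAdd m j))) := by
  unfold parity
  rw [Finset.card_filter, Finset.card_filter, Finset.card_filter, Fin.sum_univ_add]
  set a := ∑ i : Fin m, if x (Fin.castAdd g i) = true then 1 else 0 with ha
  set b := ∑ i : Fin g, if x (Fin.natAdd m i) = true then 1 else 0 with hb
  rcases Nat.mod_two_eq_zero_or_one a with h | h <;>
    rcases Nat.mod_two_eq_zero_or_one b with h' | h' <;>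
      simp [Nat.add_mod, h, h']

lemma parity_cons {k : ℕ} (b : Bool) (t : Fin k → Bool) :
    parity (Fin.cons b t) = xor b (parity t) := by
  unfold parity
  rw [Finset.card_filter, Finset.card_filter, Fin.sum_univ_succ]
  simp only [Fin.cons_zero, Fin.cons_succ]
  set a := ∑ i : Fin k, if t i = true then 1 else 0 with ha
  rcases Nat.mod_two_eq_zero_or_one a with h | h <;> cases b <;>
    simp [Nat.add_mod, h]

lemma card_parity_fiber (k : ℕ) (c : Bool) :
    (Finset.univ.filter fun z : Fin (k + 1) → Bool => parity z = c).card = 2 ^ k := by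
  rw [← Fintype.card_subtype]
  have e : {z : Fin (k + 1) → Bool // parity z = c} ≃ (Fin k → Bool) :=
    { toFun := fun z => fun i => z.1 i.succ
      invFun := fun t => ⟨Fin.cons (xor c (parity t)) t, by
        rw [parity_cons]; cases c <;> cases parity t <;> simp⟩
      left_inv := fun z => by
        have hz := z.2
        have hc : parity z.1 = xor (z.1 0) (parity (Fin.tail z.1)) := by
          conv_lhs => rw [← Fin.cons_self_tail z.1]
          rw [parity_cons]
        ext i
        refine Fin.cases ?_ (fun j => ?_) i
        · show Fin.cons (xor c (parity (Fin.tail z.1))) (Fin.tail z.1) 0 = z.1 0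
          rw [Fin.cons_zero]
          rw [hz] at hc
          have key : ∀ a b d : Bool, a = xor d b → xor a b = d := by decide
          exact key _ _ _ hc
        · show Fin.cons (xor c (parity (Fin.tail z.1))) (Fin.tail z.1) j.succ = z.1 j.succ
          rw [Fin.cons_succ]; rfl
      right_inv := fun t => by ext i; simp [Fin.cons_succ] }
  rw [Fintype.card_congr e]
  simp

/-- If g extra output bits suffice for an injective parity-preserving extension of f, then for
every output value y, 2^(g-1) bounds both the parity-matching preimage count and the
parity-mismatching preimage count; in particular g ≥ ⌈log₂ ·⌉ + 1 of each positive count. -/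
theorem extra_bits_lower_bound (n m g : ℕ) (hg : 1 ≤ g)
    (f : (Fin n → Bool) → (Fin m → Bool))
    (F : (Fin n → Bool) → (Fin (m + g) → Bool))
    (hF : Function.Injective F)
    (hagree : ∀ x, ∀ i : Fin m, F x (Fin.castAdd g i) = f x i)
    (hparity : ∀ x, parity (F x) = parity x) :
    ∀ y : Fin m → Bool,
      (Finset.univ.filter fun x => f x = y ∧ parity x = parity y).card ≤ 2 ^ (g - 1) ∧
      (Finset.univ.filter fun x => f x = y ∧ parity x ≠ parity y).card ≤ 2 ^ (g - 1) ∧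
      (0 < (Finset.univ.filter fun x => f x = y ∧ parity x = parity y).card →
        Nat.clog 2 (Finset.univ.filter fun x => f x = y ∧ parity x = parity y).card + 1 ≤ g) ∧
      (0 < (Finset.univ.filter fun x => f x = y ∧ parity x ≠ parity y).card →
        Nat.clog 2 (Finset.univ.filter fun x => f x = y ∧ parity x ≠ parity y).card + 1 ≤ g) := by
  intro y
  obtain ⟨g', rfl⟩ : ∃ g', g = g' + 1 := ⟨g - 1, by omega⟩
  -- key counting claim
  have key : ∀ c : Bool,
      (Finset.univ.filter fun x => f x = y ∧ xor (parity x) (parity y) = c).card ≤ 2 ^ g' := by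
    intro c
    rw [← card_parity_fiber g' c]
    apply Finset.card_le_card_of_injOn (fun x => fun j : Fin (g' + 1) => F x (Fin.natAdd m j))
    · intro x hx
      rw [Finset.mem_coe, Finset.mem_filter] at hx ⊢
      obtain ⟨-, hfx, hc⟩ := hx
      refine ⟨Finset.mem_univ _, ?_⟩
      have hsplit := parity_append (F x)
      have hhead : (fun i : Fin m => F x (Fin.castAdd (g' + 1) i)) = y := by
        funext i; rw [hagree x i, hfx]
      rw [hhead, hparity x] at hsplit
      -- parity x = xor (parity y) (tail parity)
      rw [← hc]
      have keyb : ∀ a b p : Bool, a = xor b p → p = xor a b := by decide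
      exact keyb _ _ _ hsplit
    · intro x1 h1 x2 h2 he
      simp only [Finset.coe_filter, Set.mem_setOf_eq] at h1 h2
      apply hF
      funext i
      refine Fin.addCases (fun i => ?_) (fun j => ?_) i
      · rw [hagree x1 i, hagree x2 i, h1.2.1, h2.2.1]
      · simpa using congrFun he j
  have hx0 : ∀ a b : Bool, (xor a b = false) ↔ a = b := by decide
  have hx1 : ∀ a b : Bool, (xor a b = true) ↔ ¬ a = b := by decide
  have e0 : (Finset.univ.filter fun x => f x = y ∧ parity x = parity y)
      = (Finset.univ.filter fun x => f x = y ∧ xor (parity x) (parity y) = false) := by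
    apply Finset.filter_congr; intro x _; rw [hx0]
  have e1 : (Finset.univ.filter fun x => f x = y ∧ parity x ≠ parity y)
      = (Finset.univ.filter fun x => f x = y ∧ xor (parity x) (parity y) = true) := by
    apply Finset.filter_congr; intro x _; rw [hx1]
  have b0 := key false
  have b1 := key true
  rw [← e0] at b0
  rw [← e1] at b1
  have hgs : g' + 1 - 1 = g' := by omega
  refine ⟨by rw [hgs]; exact b0, by rw [hgs]; exact b1, ?_, ?_⟩
  · intro hpos
    have := (Nat.clog_le_iff_le_pow (by norm_num : 1 < 2)).mpr b0
    omega
  · intro hpos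
    have := (Nat.clog_le_iff_le_pow (by norm_num : 1 < 2)).mpr b1
    omega
end

section
/- For an injective parity-preserving extension F of f with g extra bits, and for a fixed output value y of f, all preimages x of y with parity(x) = parity(y) must receive distinct even-parity patterns in the g extra bits, and there are exactly 2^(g-1) even-parity bitvectors of length g (for g ≥ 1). Hence the number of parity-matching preimages of any single output value is at most 2^(g-1). -/
lemma nat_mod_xor (a b : ℕ) :
    (((a + b) % 2) == 1) = xor ((a % 2) == 1) ((b % 2) == 1) := by
  rcases Nat.mod_two_eq_zero_or_one a with h | h <;>
    rcases Nat.mod_two_eq_zero_or_one b with h' | h' <;>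
    simp [Nat.add_mod, h, h']

lemma parity_split {m g : ℕ} (z : Fin (m + g) → Bool) :
    parity z = xor (parity fun i : Fin m => z (Fin.castAdd g i))
      (parity fun j : Fin g => z (Fin.natAdd m j)) := by
  unfold parity
  rw [← nat_mod_xor]
  congr 1
  rw [Finset.card_filter, Finset.card_filter, Finset.card_filter,
    ← Fintype.sum_equiv (finSumFinEquiv (m := m) (n := g))
      (fun i => if z (finSumFinEquiv i) = true then 1 else 0)
      (fun i => if z i = true then 1 else 0) (fun i => rfl)]
  rw [Fintype.sum_sum_type]
  simp
  simp only [Finset.card_filter]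
  rfl

lemma parity_flip {g : ℕ} (w : Fin g → Bool) (i : Fin g) :
    parity (Function.update w i (!w i)) = !parity w := by
  unfold parity
  have h1 : (fun j => if Function.update w i (!w i) j = true then (1:ℕ) else 0)
      = Function.update (fun j => if w j = true then (1:ℕ) else 0) i
        (if (!w i) = true then 1 else 0) := by
    funext j
    by_cases hj : j = i
    · subst hj; simp
    · simp [Function.update_of_ne hj]
  rw [Finset.card_filter, Finset.card_filter, h1,
    Finset.sum_update_of_mem (Finset.mem_univ i),
    Finset.sum_eq_sum_sdiff_singleton_add (Finset.mem_univ i)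
      (fun j => if w j = true then (1:ℕ) else 0)]
  cases hw : w i <;> rcases Nat.mod_two_eq_zero_or_one (((Finset.univ \ {i}).filter (fun x => w x = true)).card) with h | h <;>
    simp [hw, Nat.add_mod, h]

lemma even_count {g : ℕ} (hg : 1 ≤ g) :
    (Finset.univ.filter fun w : Fin g → Bool => parity w = false).card = 2 ^ (g - 1) := by
  set E := Finset.univ.filter fun w : Fin g → Bool => parity w = false with hE
  set O := Finset.univ.filter fun w : Fin g → Bool => ¬ parity w = false with hO
  have i0 : Fin g := ⟨0, hg⟩
  have hcard : E.card = O.card := by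
    apply Finset.card_bij (fun w _ => Function.update w i0 (!w i0))
    · intro w hw
      simp only [hE, hO, Finset.mem_filter, Finset.mem_univ, true_and] at hw ⊢
      simp [parity_flip, hw]
    · intro a ha b hb hab
      have := congrArg (fun w => Function.update w i0 (!w i0)) hab
      simpa [Function.update_idem, Function.update_eq_self] using this
    · intro w hw
      refine ⟨Function.update w i0 (!w i0), ?_, ?_⟩
      · simp only [hE, hO, Finset.mem_filter, Finset.mem_univ, true_and] at hw ⊢
        simp [parity_flip, hw]
      · simp [Function.update_idem, Function.update_eq_self]
  have htot : E.card + O.card = 2 ^ g := by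
    rw [hE, hO, Finset.card_filter_add_card_filter_not]
    simp [Finset.card_univ]
  have hpow : 2 ^ g = 2 * 2 ^ (g - 1) := by
    conv_lhs => rw [show g = (g - 1) + 1 from (Nat.sub_add_cancel hg).symm]
    ring
  omega

/-- For an injective parity-preserving extension F of f: parity-matching preimages of a fixed
output y receive distinct even-parity patterns in the g extra bits, there are exactly 2^(g-1)
even-parity bitvectors of length g (g ≥ 1), hence at most 2^(g-1) parity-matching preimages. -/
theorem matching_preimages_distinct_even_patterns (n m g : ℕ) (hg : 1 ≤ g)
    (f : (Fin n → Bool) → (Fin m → Bool))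
    (F : (Fin n → Bool) → (Fin (m + g) → Bool))
    (hF : Function.Injective F)
    (hagree : ∀ x, ∀ i : Fin m, F x (Fin.castAdd g i) = f x i)
    (hparity : ∀ x, parity (F x) = parity x)
    (y : Fin m → Bool) :
    (∀ x, f x = y → parity x = parity y →
        parity (fun j : Fin g => F x (Fin.natAdd m j)) = false) ∧
    (∀ x₁ x₂, f x₁ = y → f x₂ = y → parity x₁ = parity y → parity x₂ = parity y →
        (fun j : Fin g => F x₁ (Fin.natAdd m j)) = (fun j : Fin g => F x₂ (Fin.natAdd m j)) →
        x₁ = x₂) ∧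
    (Finset.univ.filter fun w : Fin g → Bool => parity w = false).card = 2 ^ (g - 1) ∧
    (Finset.univ.filter fun x => f x = y ∧ parity x = parity y).card ≤ 2 ^ (g - 1) := by
  have part1 : ∀ x, f x = y → parity x = parity y →
      parity (fun j : Fin g => F x (Fin.natAdd m j)) = false := by
    intro x hfx hpx
    have hs := parity_split (F x)
    have hfront : (fun i : Fin m => F x (Fin.castAdd g i)) = y := by
      funext i; rw [hagree, hfx]
    rw [hfront, hparity x, hpx] at hs
    by_contra hb
    rw [Bool.not_eq_false] at hb
    rw [hb] at hs
    cases hy : parity y <;> rw [hy] at hs <;> exact absurd hs (by decide)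
  have part2 : ∀ x₁ x₂, f x₁ = y → f x₂ = y → parity x₁ = parity y → parity x₂ = parity y →
      (fun j : Fin g => F x₁ (Fin.natAdd m j)) = (fun j : Fin g => F x₂ (Fin.natAdd m j)) →
      x₁ = x₂ := by
    intro x₁ x₂ h1 h2 hp1 hp2 heq
    apply hF
    funext i
    refine Fin.addCases (motive := fun i => F x₁ i = F x₂ i) ?_ ?_ i
    · intro i; rw [hagree, hagree, h1, h2]
    · intro j; exact congrFun heq j
  refine ⟨part1, part2, even_count hg, ?_⟩
  calc (Finset.univ.filter fun x => f x = y ∧ parity x = parity y).card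
      ≤ (Finset.univ.filter fun w : Fin g → Bool => parity w = false).card := by
        apply Finset.card_le_card_of_injOn (fun x => fun j : Fin g => F x (Fin.natAdd m j))
        · intro x hx
          simp only [Finset.mem_coe, Finset.mem_filter, Finset.mem_univ, true_and] at hx ⊢
          exact part1 x hx.1 hx.2
        · intro x₁ h1 x₂ h2 heq
          simp only [Finset.mem_coe, Finset.mem_filter, Finset.mem_univ, true_and] at h1 h2
          exact part2 x₁ x₂ h1.1 h2.1 h1.2 h2.2 heq
    _ = 2 ^ (g - 1) := even_count hg
end
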